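/- Consider the index-2 Stokes-type DAE with E₁₁ ∈ ℂ^{n₁×n₁} invertible, A₁₁ ∈ ℂ^{n₁×n₁}, A₂₁ ∈ ℂ^{n₂×n₁} such that A₂₁ E₁₁^{-1} A₂₁ᵀ is invertible, B₁ ∈ ℂ^{n₁×m}, C₁ ∈ ℂ^{p×n₁}, C₂ ∈ ℂ^{p×n₂}, D ∈ ℂ^{p×m}, and transfer function G(s) = ℭ(s𝔼 − 𝔸)^{-1}𝔹 + D where 𝔼 = diag(E₁₁, 0), 𝔸 = [[A₁₁, A₂₁ᵀ],[A₂₁, 0]], 𝔹 = [B₁; 0], ℭ = [C₁, C₂]. Then s𝔼 − 𝔸 is invertible for all sufficiently large real s, and as s → +∞ along the real axis, G(s) converges to the constant matrix D̃ = D − C₂ (A₂₁ E₁₁^{-1} A₂₁ᵀ)^{-1} A₂₁ E₁₁^{-1} B₁; that is, the polynomial part of G is the constant matrix D̃. -/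

import Mathlib

open Matrix

private lemma tendsto_matrix_mul {ι m n k : Type*} [Fintype n] {l : Filter ι}
    {f : ι → Matrix m n ℂ} {g : ι → Matrix n k ℂ} {F : Matrix m n ℂ} {G : Matrix n k ℂ}
    (hf : Filter.Tendsto f l (nhds F)) (hg : Filter.Tendsto g l (nhds G)) :
    Filter.Tendsto (fun x => f x * g x) l (nhds (F * G)) := by
  refine tendsto_pi_nhds.mpr ?_
  intro i
  rw [tendsto_pi_nhds]
  intro j
  simp only [Matrix.mul_apply]
  exact tendsto_finset_sum _ fun c _ =>
    (tendsto_pi_nhds.mp (tendsto_pi_nhds.mp hf i) c).mul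
      (tendsto_pi_nhds.mp (tendsto_pi_nhds.mp hg c) j)

private lemma tendsto_matrix_inv {ι n : Type*} [Fintype n] [DecidableEq n] {l : Filter ι}
    {f : ι → Matrix n n ℂ} {F : Matrix n n ℂ}
    (hf : Filter.Tendsto f l (nhds F)) (hF : F.det ≠ 0) :
    Filter.Tendsto (fun x => (f x)⁻¹) l (nhds F⁻¹) := by
  have hdet : Filter.Tendsto (fun x => (f x).det) l (nhds F.det) :=
    ((continuous_id.matrix_det).tendsto F).comp hf
  have hadj : Filter.Tendsto (fun x => (f x).adjugate) l (nhds F.adjugate) :=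
    ((continuous_id.matrix_adjugate).tendsto F).comp hf
  have h := (hdet.inv₀ hF).smul hadj
  simpa only [Matrix.inv_def, Ring.inverse_eq_inv'] using h

private lemma key_inv {n₁ n₂ : Type*} [Fintype n₁] [Fintype n₂] [DecidableEq n₁] [DecidableEq n₂]
    (c : ℂ) (hc : c ≠ 0) (Y : Matrix n₁ n₁ ℂ) (A : Matrix n₂ n₁ ℂ)
    (hY : IsUnit Y) (hW : IsUnit (A * Y⁻¹ * Aᵀ)) :
    fromBlocks (c • Y) (-Aᵀ) (-A) 0 *
      fromBlocks (c⁻¹ • (Y⁻¹ - Y⁻¹ * Aᵀ * ((A * Y⁻¹ * Aᵀ)⁻¹ * (A * Y⁻¹))))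
        (-(Y⁻¹ * Aᵀ * (A * Y⁻¹ * Aᵀ)⁻¹))
        (-((A * Y⁻¹ * Aᵀ)⁻¹ * (A * Y⁻¹)))
        (-(c • (A * Y⁻¹ * Aᵀ)⁻¹)) = 1 := by
  have hYd : IsUnit Y.det := (Matrix.isUnit_iff_isUnit_det Y).mp hY
  have hWd : IsUnit (A * Y⁻¹ * Aᵀ).det := (Matrix.isUnit_iff_isUnit_det _).mp hW
  have hYYi : Y * Y⁻¹ = 1 := Matrix.mul_nonsing_inv Y hYd
  have hWd' : IsUnit (A * (Y⁻¹ * Aᵀ)).det := by rwa [Matrix.mul_assoc] at hWd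
  have hWWi : A * (Y⁻¹ * Aᵀ) * (A * (Y⁻¹ * Aᵀ))⁻¹ = 1 := Matrix.mul_nonsing_inv _ hWd'
  have hY1 : ∀ (Z : Matrix n₁ (n₁ ⊕ n₂) ℂ), Y * (Y⁻¹ * Z) = Z := fun Z => by
    rw [← Matrix.mul_assoc, hYYi, Matrix.one_mul]
  have hY2 : ∀ (Z : Matrix n₁ n₂ ℂ), Y * (Y⁻¹ * Z) = Z := fun Z => by
    rw [← Matrix.mul_assoc, hYYi, Matrix.one_mul]
  have hY3 : ∀ (Z : Matrix n₁ n₁ ℂ), Y * (Y⁻¹ * Z) = Z := fun Z => by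
    rw [← Matrix.mul_assoc, hYYi, Matrix.one_mul]
  have hW2 : A * (Y⁻¹ * (Aᵀ * (A * (Y⁻¹ * Aᵀ))⁻¹)) = 1 := by
    rw [← Matrix.mul_assoc, ← Matrix.mul_assoc, Matrix.mul_assoc A Y⁻¹ Aᵀ]; exact hWWi
  have hW1 : ∀ (Z : Matrix n₂ n₁ ℂ),
      A * (Y⁻¹ * (Aᵀ * ((A * (Y⁻¹ * Aᵀ))⁻¹ * Z))) = Z := fun Z => by
    rw [← Matrix.mul_assoc, ← Matrix.mul_assoc, ← Matrix.mul_assoc, Matrix.mul_assoc A Y⁻¹ Aᵀ,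
      hWWi, Matrix.one_mul]
  rw [fromBlocks_multiply, ← fromBlocks_one]
  simp only [Matrix.mul_smul, Matrix.smul_mul, smul_smul, Matrix.mul_sub, Matrix.sub_mul,
    Matrix.mul_assoc, Matrix.neg_mul, Matrix.mul_neg, Matrix.zero_mul, Matrix.mul_zero,
    add_zero, zero_add, neg_neg, smul_neg, neg_smul, smul_zero, neg_zero,
    hY1, hY2, hY3, hW1, hW2, hYYi, Matrix.mul_one, Matrix.one_mul,
    mul_inv_cancel₀ hc, inv_mul_cancel₀ hc, one_smul, smul_sub, sub_add_cancel,
    neg_add_cancel, sub_self]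

/-- The polynomial part of the transfer function of an index-2 Stokes-type DAE
is the constant matrix `D̃ = D − C₂ (A₂₁ E₁₁⁻¹ A₂₁ᵀ)⁻¹ A₂₁ E₁₁⁻¹ B₁`:
the pencil `s𝔼 − 𝔸` is invertible for all sufficiently large real `s`, and
`G(s) → D̃` as `s → +∞` along the real axis. -/
theorem index2_polynomial_part
    (n₁ n₂ m p : ℕ)
    (E₁₁ A₁₁ : Matrix (Fin n₁) (Fin n₁) ℂ)
    (A₂₁ : Matrix (Fin n₂) (Fin n₁) ℂ)
    (B₁ : Matrix (Fin n₁) (Fin m) ℂ)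
    (C₁ : Matrix (Fin p) (Fin n₁) ℂ)
    (C₂ : Matrix (Fin p) (Fin n₂) ℂ)
    (D : Matrix (Fin p) (Fin m) ℂ)
    (hE : IsUnit E₁₁)
    (hSchur : IsUnit (A₂₁ * E₁₁⁻¹ * A₂₁ᵀ)) :
    (∀ᶠ s : ℝ in Filter.atTop,
        IsUnit ((s : ℂ) • fromBlocks E₁₁ 0 0 0 - fromBlocks A₁₁ A₂₁ᵀ A₂₁ 0))
    ∧ Filter.Tendsto
        (fun s : ℝ =>
          fromCols C₁ C₂
            * ((s : ℂ) • fromBlocks E₁₁ 0 0 0 - fromBlocks A₁₁ A₂₁ᵀ A₂₁ 0)⁻¹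
            * fromRows B₁ (0 : Matrix (Fin n₂) (Fin m) ℂ) + D)
        Filter.atTop
        (nhds (D - C₂ * (A₂₁ * E₁₁⁻¹ * A₂₁ᵀ)⁻¹ * (A₂₁ * E₁₁⁻¹ * B₁))) := by
  classical
  -- notation
  set Y : ℝ → Matrix (Fin n₁) (Fin n₁) ℂ := fun s => E₁₁ - ((s : ℂ))⁻¹ • A₁₁ with hYdef
  set W : ℝ → Matrix (Fin n₂) (Fin n₂) ℂ := fun s => A₂₁ * (Y s)⁻¹ * A₂₁ᵀ with hWdef
  -- (s:ℂ)⁻¹ → 0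
  have hc0 : Filter.Tendsto (fun s : ℝ => ((s : ℂ))⁻¹) Filter.atTop (nhds 0) := by
    have : Filter.Tendsto (fun s : ℝ => ((s⁻¹ : ℝ) : ℂ)) Filter.atTop (nhds ((0 : ℝ) : ℂ)) :=
      (Complex.continuous_ofReal.tendsto 0).comp tendsto_inv_atTop_zero
    simpa [Complex.ofReal_inv] using this
  -- Y → E₁₁
  have hYt : Filter.Tendsto Y Filter.atTop (nhds E₁₁) := by
    have h1 : Filter.Tendsto (fun s : ℝ => ((s : ℂ))⁻¹ • A₁₁) Filter.atTop
        (nhds ((0 : ℂ) • A₁₁)) := hc0.smul_const A₁₁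
    have h2 := (tendsto_const_nhds (x := E₁₁) (f := Filter.atTop)).sub h1
    simpa using h2
  have hEdet : E₁₁.det ≠ 0 := by
    have := (Matrix.isUnit_iff_isUnit_det E₁₁).mp hE
    exact isUnit_iff_ne_zero.mp this
  -- eventually Y invertible
  have hYdet : Filter.Tendsto (fun s => (Y s).det) Filter.atTop (nhds E₁₁.det) :=
    ((continuous_id.matrix_det).tendsto E₁₁).comp hYt
  have hYu : ∀ᶠ s : ℝ in Filter.atTop, IsUnit (Y s) := by
    filter_upwards [hYdet.eventually_ne hEdet] with s hs
    exact (Matrix.isUnit_iff_isUnit_det _).mpr (isUnit_iff_ne_zero.mpr hs)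
  -- (Y s)⁻¹ → E₁₁⁻¹
  have hYit : Filter.Tendsto (fun s => (Y s)⁻¹) Filter.atTop (nhds E₁₁⁻¹) :=
    tendsto_matrix_inv hYt hEdet
  -- W → Schur complement
  have hWt : Filter.Tendsto W Filter.atTop (nhds (A₂₁ * E₁₁⁻¹ * A₂₁ᵀ)) :=
    tendsto_matrix_mul (tendsto_matrix_mul tendsto_const_nhds hYit) tendsto_const_nhds
  have hSdet : (A₂₁ * E₁₁⁻¹ * A₂₁ᵀ).det ≠ 0 :=
    isUnit_iff_ne_zero.mp ((Matrix.isUnit_iff_isUnit_det _).mp hSchur)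
  have hWdet : Filter.Tendsto (fun s => (W s).det) Filter.atTop
      (nhds (A₂₁ * E₁₁⁻¹ * A₂₁ᵀ).det) :=
    ((continuous_id.matrix_det).tendsto _).comp hWt
  have hWu : ∀ᶠ s : ℝ in Filter.atTop, IsUnit (W s) := by
    filter_upwards [hWdet.eventually_ne hSdet] with s hs
    exact (Matrix.isUnit_iff_isUnit_det _).mpr (isUnit_iff_ne_zero.mpr hs)
  have hWit : Filter.Tendsto (fun s => (W s)⁻¹) Filter.atTop
      (nhds (A₂₁ * E₁₁⁻¹ * A₂₁ᵀ)⁻¹) :=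
    tendsto_matrix_inv hWt hSdet
  -- the pencil equals the block matrix with c • Y s, for s ≠ 0
  have hpencil : ∀ s : ℝ, (s : ℂ) ≠ 0 →
      (s : ℂ) • fromBlocks E₁₁ 0 0 0 - fromBlocks A₁₁ A₂₁ᵀ A₂₁ 0
        = fromBlocks ((s : ℂ) • Y s) (-A₂₁ᵀ) (-A₂₁) 0 := by
    intro s hs
    have h1 : (s : ℂ) • Y s = (s : ℂ) • E₁₁ - A₁₁ := by
      rw [hYdef]
      simp [smul_sub, smul_smul, mul_inv_cancel₀ hs]
    rw [h1, sub_eq_add_neg, Matrix.fromBlocks_neg, Matrix.fromBlocks_smul,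
      Matrix.fromBlocks_add]
    simp [sub_eq_add_neg]
  -- key events
  have hkey : ∀ᶠ s : ℝ in Filter.atTop,
      IsUnit ((s : ℂ) • fromBlocks E₁₁ 0 0 0 - fromBlocks A₁₁ A₂₁ᵀ A₂₁ 0) ∧
      ((s : ℂ) • fromBlocks E₁₁ 0 0 0 - fromBlocks A₁₁ A₂₁ᵀ A₂₁ 0)⁻¹
        = fromBlocks
            (((s:ℂ))⁻¹ • ((Y s)⁻¹ - (Y s)⁻¹ * A₂₁ᵀ * ((W s)⁻¹ * (A₂₁ * (Y s)⁻¹))))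
            (-((Y s)⁻¹ * A₂₁ᵀ * (W s)⁻¹))
            (-((W s)⁻¹ * (A₂₁ * (Y s)⁻¹)))
            (-((s:ℂ) • (W s)⁻¹)) := by
    filter_upwards [hYu, hWu, Filter.eventually_ge_atTop (1 : ℝ)] with s hYs hWs hs1
    have hs0 : (s : ℂ) ≠ 0 := by
      simp only [ne_eq, Complex.ofReal_eq_zero]
      linarith
    have hprod := key_inv (s : ℂ) hs0 (Y s) A₂₁ hYs hWs
    rw [hpencil s hs0]
    exact ⟨(Matrix.isUnit_iff_isUnit_det _).mpr (Matrix.isUnit_det_of_right_inverse hprod), Matrix.inv_eq_right_inv hprod⟩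
  refine ⟨hkey.mono fun s hs => hs.1, ?_⟩
  -- the limit
  have hAYt : Filter.Tendsto (fun s => A₂₁ * (Y s)⁻¹) Filter.atTop (nhds (A₂₁ * E₁₁⁻¹)) :=
    tendsto_matrix_mul tendsto_const_nhds hYit
  -- second (surviving) term
  have hT2 : Filter.Tendsto
      (fun s : ℝ => C₂ * ((W s)⁻¹ * (A₂₁ * (Y s)⁻¹)) * B₁) Filter.atTop
      (nhds (C₂ * ((A₂₁ * E₁₁⁻¹ * A₂₁ᵀ)⁻¹ * (A₂₁ * E₁₁⁻¹)) * B₁)) :=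
    tendsto_matrix_mul (tendsto_matrix_mul tendsto_const_nhds
      (tendsto_matrix_mul hWit hAYt)) tendsto_const_nhds
  -- first (vanishing) term
  have hT1 : Filter.Tendsto
      (fun s : ℝ => ((s:ℂ))⁻¹ •
        (C₁ * ((Y s)⁻¹ - (Y s)⁻¹ * A₂₁ᵀ * ((W s)⁻¹ * (A₂₁ * (Y s)⁻¹))) * B₁))
      Filter.atTop (nhds 0) := by
    have hinner : Filter.Tendsto
        (fun s : ℝ => C₁ * ((Y s)⁻¹ - (Y s)⁻¹ * A₂₁ᵀ * ((W s)⁻¹ * (A₂₁ * (Y s)⁻¹))) * B₁)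
        Filter.atTop
        (nhds (C₁ * (E₁₁⁻¹ - E₁₁⁻¹ * A₂₁ᵀ * ((A₂₁ * E₁₁⁻¹ * A₂₁ᵀ)⁻¹ * (A₂₁ * E₁₁⁻¹))) * B₁)) :=
      tendsto_matrix_mul (tendsto_matrix_mul tendsto_const_nhds
        (hYit.sub (tendsto_matrix_mul (tendsto_matrix_mul hYit tendsto_const_nhds)
          (tendsto_matrix_mul hWit hAYt)))) tendsto_const_nhds
    have := hc0.smul hinner
    simpa using this
  have hgt : Filter.Tendsto
      (fun s : ℝ => ((s:ℂ))⁻¹ •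
          (C₁ * ((Y s)⁻¹ - (Y s)⁻¹ * A₂₁ᵀ * ((W s)⁻¹ * (A₂₁ * (Y s)⁻¹))) * B₁)
        - C₂ * ((W s)⁻¹ * (A₂₁ * (Y s)⁻¹)) * B₁ + D)
      Filter.atTop
      (nhds (D - C₂ * (A₂₁ * E₁₁⁻¹ * A₂₁ᵀ)⁻¹ * (A₂₁ * E₁₁⁻¹ * B₁))) := by
    have h := (hT1.sub hT2).add (tendsto_const_nhds (x := D))
    have heq : (0 : Matrix (Fin p) (Fin m) ℂ)
        - C₂ * ((A₂₁ * E₁₁⁻¹ * A₂₁ᵀ)⁻¹ * (A₂₁ * E₁₁⁻¹)) * B₁ + D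
        = D - C₂ * (A₂₁ * E₁₁⁻¹ * A₂₁ᵀ)⁻¹ * (A₂₁ * E₁₁⁻¹ * B₁) := by
      rw [zero_sub, neg_add_eq_sub]
      congr 1
      simp only [Matrix.mul_assoc]
    rwa [heq] at h
  refine hgt.congr' ?_
  filter_upwards [hkey] with s hs
  rw [hs.2, fromCols_mul_fromBlocks, fromCols_mul_fromRows]
  simp only [Matrix.mul_zero, add_zero, Matrix.mul_neg, Matrix.mul_smul, Matrix.add_mul,
    Matrix.neg_mul, Matrix.smul_mul]
  abel
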